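/- Let A, B ⊆ Ω be measurable and let (u_A, y_A, p_A) and (u_B, y_B, p_B) be solutions of (P_A) and (P_B). Then μ‖u_B − u_A‖²_{L²(Ω)} + ‖y_B − y_A‖_Y² ≤ ∫_Ω (χ_A − χ_B)·(p_A·u_B − p_B·u_A) dx, where μ ≥ 0 is the strong convexity modulus of g (the inequality also holds with μ = 0 if g is merely convex). -/

import Mathlib

open MeasureTheory ENNReal Set Filter Metric Topology
open scoped Classical symmDiff NNReal

noncomputable section

namespace L0Control

variable {α : Type*} [MeasurableSpace α]

/-- The characteristic function `χ_A` of a set `A`, as a real-valued function. -/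
def chi (A : Set α) (x : α) : ℝ := A.indicator (fun _ => (1 : ℝ)) x

/-- Pointwise multiplication of `u ∈ L²(μ)` by the characteristic function of `A`,
as an element of `L²(μ)` (junk value `0` if `A` is not measurable). -/
def chiMul {μ : Measure α} (A : Set α) (u : Lp ℝ 2 μ) : Lp ℝ 2 μ :=
  if hA : MeasurableSet A then
    MemLp.toLp (A.indicator (u : α → ℝ)) ((Lp.memLp u).indicator hA)
  else 0

variable {Y : Type*} [NormedAddCommGroup Y] [InnerProductSpace ℝ Y]

/-- The objective functional
`J(u, A) = ½‖S(χ_A u) − y_d‖² + ∫_Ω (g(u(x)) + χ_A(x) β(x)) dx`,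
with values in `EReal` (the `g`-part may be `+∞`). -/
def Jfun {μ : Measure α} (S : Lp ℝ 2 μ →L[ℝ] Y) (yd : Y) (g : ℝ → ℝ≥0∞) (β : α → ℝ)
    (u : Lp ℝ 2 μ) (A : Set α) : EReal :=
  ((2⁻¹ * ‖S (chiMul A u) - yd‖ ^ 2 + ∫ x in A, β x ∂μ : ℝ) : EReal)
    + ((∫⁻ x, g (u x) ∂μ : ℝ≥0∞) : EReal)

/-- `u` minimizes `J(·, A)` over `L²(μ)`. -/
def IsMinimizer {μ : Measure α} (S : Lp ℝ 2 μ →L[ℝ] Y) (yd : Y) (g : ℝ → ℝ≥0∞) (β : α → ℝ)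
    (A : Set α) (u : Lp ℝ 2 μ) : Prop :=
  ∀ v : Lp ℝ 2 μ, Jfun S yd g β u A ≤ Jfun S yd g β v A

/-- `(u, y, p)` is a solution triple of the problem `(P_A)`:
`u` minimizes `J(·, A)`, `y = S(χ_A u)` is the state and `p = S*(y − y_d)` the adjoint state. -/
def IsSolution {μ : Measure α} [CompleteSpace Y] (S : Lp ℝ 2 μ →L[ℝ] Y) (yd : Y)
    (g : ℝ → ℝ≥0∞) (β : α → ℝ) (A : Set α) (u : Lp ℝ 2 μ) (y : Y) (p : Lp ℝ 2 μ) : Prop :=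
  IsMinimizer S yd g β A u ∧ y = S (chiMul A u) ∧
    p = ContinuousLinearMap.adjoint S (y - yd)

/-- The value function `J(A) = inf_{u ∈ L²} J(u, A)`. -/
def Jval {μ : Measure α} (S : Lp ℝ 2 μ →L[ℝ] Y) (yd : Y) (g : ℝ → ℝ≥0∞) (β : α → ℝ)
    (A : Set α) : EReal :=
  ⨅ u : Lp ℝ 2 μ, Jfun S yd g β u A

/-- `H̄(p) = min_{u ∈ ℝ} (p·u + g(u)) = −g*(−p)`, with values in `EReal`. -/
def Hbar (g : ℝ → ℝ≥0∞) (p : ℝ) : EReal :=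
  ⨅ u : ℝ, ((p * u : ℝ) : EReal) + (g u : EReal)

/-- `H̄(p)` as a real number (it is finite under the standing assumptions). -/
def HbarR (g : ℝ → ℝ≥0∞) (p : ℝ) : ℝ := (Hbar g p).toReal

/-- Absolute value on `EReal`. -/
def eabs (x : EReal) : EReal := max x (-x)

end L0Control


namespace L0Control

variable {α : Type*} [MeasurableSpace α]

theorem chiMul_coe {μ : Measure α} {A : Set α} (hA : MeasurableSet A) (u : Lp ℝ 2 μ) :
    (chiMul A u : α → ℝ) =ᵐ[μ] A.indicator u := by
  simp only [chiMul, dif_pos hA]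
  exact MemLp.coeFn_toLp _

theorem chiMul_lin {μ : Measure α} {A : Set α} (hA : MeasurableSet A) (a b : ℝ)
    (u v : Lp ℝ 2 μ) :
    chiMul A (a • u + b • v) = a • chiMul A u + b • chiMul A v := by
  apply Lp.ext
  filter_upwards [chiMul_coe hA (a • u + b • v), chiMul_coe hA u, chiMul_coe hA v,
    Lp.coeFn_add (a • u) (b • v), Lp.coeFn_smul a u, Lp.coeFn_smul b v,
    Lp.coeFn_add (a • chiMul A u) (b • chiMul A v),
    Lp.coeFn_smul a (chiMul A u), Lp.coeFn_smul b (chiMul A v)] with x h1 h2 h3 h4 h5 h6 h7 h8 h9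
  rw [h1, h7, Pi.add_apply, h8, h9, Pi.smul_apply, Pi.smul_apply, h2, h3]
  by_cases hx : x ∈ A
  · simp only [Set.indicator_of_mem hx, h4, Pi.add_apply, h5, h6, Pi.smul_apply]
  · simp [Set.indicator_of_notMem hx]

theorem chiMul_sub {μ : Measure α} {A : Set α} (hA : MeasurableSet A) (u v : Lp ℝ 2 μ) :
    chiMul A (u - v) = chiMul A u - chiMul A v := by
  have := chiMul_lin hA 1 (-1) u v
  simpa [sub_eq_add_neg, neg_smul, one_smul] using this

theorem norm_combo {Y : Type*} [NormedAddCommGroup Y] [InnerProductSpace ℝ Y]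
    (x y z : Y) (l : ℝ) :
    ‖(l • x + (1 - l) • y) - z‖ ^ 2
      = l * ‖x - z‖ ^ 2 + (1 - l) * ‖y - z‖ ^ 2 - l * (1 - l) * ‖x - y‖ ^ 2 := by
  have h : ∀ w : Y, ‖w‖ ^ 2 = inner (𝕜 := ℝ) w w := fun w => (real_inner_self_eq_norm_sq w).symm
  simp only [h, inner_sub_sub_self, inner_add_add_self, inner_smul_left, inner_smul_right,
    inner_sub_left, inner_sub_right, inner_add_left, inner_add_right, RCLike.conj_to_real,
    conj_trivial]
  ring_nf

theorem coe_ennreal_toReal' {G : ℝ≥0∞} (hG : G ≠ ⊤) :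
    ((G.toReal : ℝ) : EReal) = (G : EReal) := by
  rw [← EReal.toReal_coe_ennreal (x := G)]
  exact EReal.coe_toReal (by simpa using hG) (by simp)

theorem ereal_extract {r1 r2 : ℝ} {G1 G2 : ℝ≥0∞} (hG2 : G2 ≠ ⊤)
    (h : (r1 : EReal) + (G1 : EReal) ≤ (r2 : EReal) + (G2 : EReal)) :
    G1 ≠ ⊤ ∧ r1 + G1.toReal ≤ r2 + G2.toReal := by
  have hG1 : G1 ≠ ⊤ := by
    intro hG1
    rw [hG1, EReal.coe_ennreal_top, EReal.add_top_of_ne_bot (EReal.coe_ne_bot r1)] at h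
    have : (r2 : EReal) + (G2 : EReal) < ⊤ := by
      rw [← coe_ennreal_toReal' hG2, ← EReal.coe_add]
      exact EReal.coe_lt_top _
    exact absurd (top_le_iff.mp h) this.ne
  refine ⟨hG1, ?_⟩
  rw [← coe_ennreal_toReal' hG1, ← coe_ennreal_toReal' hG2, ← EReal.coe_add,
    ← EReal.coe_add, EReal.coe_le_coe_iff] at h
  exact h

theorem mul_self_eq_sq_lintegral {μ : Measure α} (f : Lp ℝ 2 μ) :
    ∫⁻ x, ENNReal.ofReal ((f x) ^ 2) ∂μ = ENNReal.ofReal (‖f‖ ^ 2) := by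
  have h1 : ‖f‖ ^ 2 = ∫ x, f x * f x ∂μ := by
    rw [← real_inner_self_eq_norm_sq f, L2.inner_def]
    simp [RCLike.inner_apply, sq]
  rw [h1, MeasureTheory.ofReal_integral_eq_lintegral_ofReal]
  · exact lintegral_congr fun x => by rw [sq]
  · simpa [RCLike.inner_apply, sq] using L2.integrable_inner (𝕜 := ℝ) f f
  · exact Filter.Eventually.of_forall fun x => mul_self_nonneg _

theorem inner_expand {Y : Type*} [NormedAddCommGroup Y] [InnerProductSpace ℝ Y] (a b c : Y) :
    inner (𝕜 := ℝ) (a - c) a + inner (𝕜 := ℝ) (b - c) b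
      - inner (𝕜 := ℝ) (a - c) b - inner (𝕜 := ℝ) (b - c) a = ‖b - a‖ ^ 2 := by
  have h : ∀ w : Y, ‖w‖ ^ 2 = inner (𝕜 := ℝ) w w := fun w => (real_inner_self_eq_norm_sq w).symm
  simp only [h, inner_sub_left, inner_sub_right]
  rw [real_inner_comm a b]
  ring

theorem minimizer_vi {μ : Measure α} {Y : Type*} [NormedAddCommGroup Y] [InnerProductSpace ℝ Y]
    (S : Lp ℝ 2 μ →L[ℝ] Y) (yd : Y) (g : ℝ → ℝ≥0∞) (β : α → ℝ)
    (hg_meas : Measurable g) (μ₀ : ℝ) (hμ₀ : 0 ≤ μ₀)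
    (hg_sconv : ∀ u v l : ℝ, l ∈ Set.Ioo (0 : ℝ) 1 →
      ENNReal.ofReal (μ₀ / 2 * l * (1 - l) * (u - v) ^ 2) + g (l * u + (1 - l) * v)
        ≤ ENNReal.ofReal l * g u + ENNReal.ofReal (1 - l) * g v)
    {C : Set α} (hC : MeasurableSet C) {uC v : Lp ℝ 2 μ}
    (hmin : IsMinimizer S yd g β C uC)
    (hGv : (∫⁻ x, g (v x) ∂μ) ≠ ⊤) (hGuC : (∫⁻ x, g (uC x) ∂μ) ≠ ⊤) :
    2⁻¹ * ‖S (chiMul C uC) - yd‖ ^ 2 + (∫⁻ x, g (uC x) ∂μ).toReal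
      + (2⁻¹ * ‖S (chiMul C (v - uC))‖ ^ 2 + μ₀ / 2 * ‖v - uC‖ ^ 2)
      ≤ 2⁻¹ * ‖S (chiMul C v) - yd‖ ^ 2 + (∫⁻ x, g (v x) ∂μ).toReal := by
  have key : ∀ l : ℝ, l ∈ Set.Ioo (0 : ℝ) 1 →
      2⁻¹ * ‖S (chiMul C uC) - yd‖ ^ 2 + (∫⁻ x, g (uC x) ∂μ).toReal
        + (1 - l) * (2⁻¹ * ‖S (chiMul C (v - uC))‖ ^ 2 + μ₀ / 2 * ‖v - uC‖ ^ 2)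
        ≤ 2⁻¹ * ‖S (chiMul C v) - yd‖ ^ 2 + (∫⁻ x, g (v x) ∂μ).toReal := by
    intro l hl
    obtain ⟨hl0, hl1⟩ := hl
    set w : Lp ℝ 2 μ := l • v + (1 - l) • uC with hw
    have hcw : S (chiMul C w) = l • S (chiMul C v) + (1 - l) • S (chiMul C uC) := by
      rw [hw, chiMul_lin hC, map_add, S.map_smul, S.map_smul]
    have hdiff : S (chiMul C v) - S (chiMul C uC) = S (chiMul C (v - uC)) := by
      rw [chiMul_sub hC, map_sub]
    have hF : ‖S (chiMul C w) - yd‖ ^ 2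
        = l * ‖S (chiMul C v) - yd‖ ^ 2 + (1 - l) * ‖S (chiMul C uC) - yd‖ ^ 2
          - l * (1 - l) * ‖S (chiMul C (v - uC))‖ ^ 2 := by
      rw [hcw, norm_combo, ← hdiff]
    -- the g part
    have haeV : AEMeasurable (fun x => g (v x)) μ :=
      hg_meas.comp_aemeasurable (Lp.aestronglyMeasurable v).aemeasurable
    have haeU : AEMeasurable (fun x => g (uC x)) μ :=
      hg_meas.comp_aemeasurable (Lp.aestronglyMeasurable uC).aemeasurable
    have haeS : AEMeasurable (fun x => ENNReal.ofReal ((v x - uC x) ^ 2)) μ := by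
      apply ENNReal.measurable_ofReal.comp_aemeasurable
      exact (((Lp.aestronglyMeasurable v).aemeasurable.sub
        (Lp.aestronglyMeasurable uC).aemeasurable).pow_const 2)
    have hGw : ENNReal.ofReal (μ₀ / 2 * l * (1 - l)) * ENNReal.ofReal (‖v - uC‖ ^ 2)
          + ∫⁻ x, g (w x) ∂μ
        ≤ ENNReal.ofReal l * ∫⁻ x, g (v x) ∂μ
          + ENNReal.ofReal (1 - l) * ∫⁻ x, g (uC x) ∂μ := by
      have hae : ∀ᵐ x ∂μ, w x = l * v x + (1 - l) * uC x := by
        filter_upwards [Lp.coeFn_add (l • v) ((1 - l) • uC), Lp.coeFn_smul l v,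
          Lp.coeFn_smul (1 - l) uC] with x h1 h2 h3
        rw [hw, h1, Pi.add_apply, h2, h3, Pi.smul_apply, Pi.smul_apply, smul_eq_mul, smul_eq_mul]
      have step1 : ∫⁻ x, (ENNReal.ofReal (μ₀ / 2 * l * (1 - l)
            * (v x - uC x) ^ 2) + g (w x)) ∂μ
          ≤ ∫⁻ x, (ENNReal.ofReal l * g (v x) + ENNReal.ofReal (1 - l) * g (uC x)) ∂μ := by
        apply lintegral_mono_ae
        filter_upwards [hae] with x hx
        rw [hx]
        exact hg_sconv (v x) (uC x) l ⟨hl0, hl1⟩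
      have lhs_eq : ∫⁻ x, (ENNReal.ofReal (μ₀ / 2 * l * (1 - l)
            * (v x - uC x) ^ 2) + g (w x)) ∂μ
          = ENNReal.ofReal (μ₀ / 2 * l * (1 - l)) * ENNReal.ofReal (‖v - uC‖ ^ 2)
            + ∫⁻ x, g (w x) ∂μ := by
        have hmul : ∀ x : α, ENNReal.ofReal (μ₀ / 2 * l * (1 - l) * (v x - uC x) ^ 2)
            = ENNReal.ofReal (μ₀ / 2 * l * (1 - l)) * ENNReal.ofReal ((v x - uC x) ^ 2) :=
          fun x => ENNReal.ofReal_mul (mul_nonneg (mul_nonneg (by linarith) hl0.le) (by linarith))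
        simp_rw [hmul]
        rw [lintegral_add_left' (haeS.const_mul _)]
        congr 1
        rw [lintegral_const_mul'' _ haeS]
        congr 1
        rw [← mul_self_eq_sq_lintegral (v - uC)]
        apply lintegral_congr_ae
        filter_upwards [Lp.coeFn_sub v uC] with x hx
        rw [hx, Pi.sub_apply]
      have rhs_eq : ∫⁻ x, (ENNReal.ofReal l * g (v x) + ENNReal.ofReal (1 - l) * g (uC x)) ∂μ
          = ENNReal.ofReal l * ∫⁻ x, g (v x) ∂μ
            + ENNReal.ofReal (1 - l) * ∫⁻ x, g (uC x) ∂μ := by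
        rw [lintegral_add_left' (haeV.const_mul _),
          lintegral_const_mul'' _ haeV, lintegral_const_mul'' _ haeU]
      rw [← lhs_eq, ← rhs_eq]
      exact step1
    have hRHSfin : ENNReal.ofReal l * (∫⁻ x, g (v x) ∂μ)
        + ENNReal.ofReal (1 - l) * (∫⁻ x, g (uC x) ∂μ) ≠ ⊤ :=
      ENNReal.add_ne_top.mpr ⟨ENNReal.mul_ne_top ENNReal.ofReal_ne_top hGv,
        ENNReal.mul_ne_top ENNReal.ofReal_ne_top hGuC⟩
    have hGwfin : (∫⁻ x, g (w x) ∂μ) ≠ ⊤ := by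
      intro htop
      apply hRHSfin
      refine top_le_iff.mp (le_trans ?_ hGw)
      rw [htop, add_top]
    have hGwR : μ₀ / 2 * l * (1 - l) * ‖v - uC‖ ^ 2 + (∫⁻ x, g (w x) ∂μ).toReal
        ≤ l * (∫⁻ x, g (v x) ∂μ).toReal + (1 - l) * (∫⁻ x, g (uC x) ∂μ).toReal := by
      have h1 := ENNReal.toReal_mono hRHSfin hGw
      rw [ENNReal.toReal_add (ENNReal.mul_ne_top ENNReal.ofReal_ne_top ENNReal.ofReal_ne_top)
          hGwfin,
        ENNReal.toReal_add (ENNReal.mul_ne_top ENNReal.ofReal_ne_top hGv)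
          (ENNReal.mul_ne_top ENNReal.ofReal_ne_top hGuC),
        ENNReal.toReal_mul, ENNReal.toReal_mul, ENNReal.toReal_mul,
        ENNReal.toReal_ofReal (mul_nonneg (mul_nonneg (by linarith) hl0.le) (by linarith)), ENNReal.toReal_ofReal (sq_nonneg _),
        ENNReal.toReal_ofReal hl0.le, ENNReal.toReal_ofReal (by linarith)] at h1
      exact h1
    -- minimality
    have hm := hmin w
    unfold Jfun at hm
    obtain ⟨-, hmR⟩ := ereal_extract hGwfin hm
    rw [hF] at hmR
    have hdiffge : 0 ≤ l * ((2⁻¹ * ‖S (chiMul C v) - yd‖ ^ 2 + (∫⁻ x, g (v x) ∂μ).toReal)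
        - (2⁻¹ * ‖S (chiMul C uC) - yd‖ ^ 2 + (∫⁻ x, g (uC x) ∂μ).toReal
          + (1 - l) * (2⁻¹ * ‖S (chiMul C (v - uC))‖ ^ 2 + μ₀ / 2 * ‖v - uC‖ ^ 2))) := by
      have hid : l * ((2⁻¹ * ‖S (chiMul C v) - yd‖ ^ 2 + (∫⁻ x, g (v x) ∂μ).toReal)
          - (2⁻¹ * ‖S (chiMul C uC) - yd‖ ^ 2 + (∫⁻ x, g (uC x) ∂μ).toReal
            + (1 - l) * (2⁻¹ * ‖S (chiMul C (v - uC))‖ ^ 2 + μ₀ / 2 * ‖v - uC‖ ^ 2)))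
          = (2⁻¹ * (l * ‖S (chiMul C v) - yd‖ ^ 2 + (1 - l) * ‖S (chiMul C uC) - yd‖ ^ 2
                - l * (1 - l) * ‖S (chiMul C (v - uC))‖ ^ 2) + ∫ x in C, β x ∂μ
              + (∫⁻ x, g (w x) ∂μ).toReal)
            - (2⁻¹ * ‖S (chiMul C uC) - yd‖ ^ 2 + ∫ x in C, β x ∂μ
              + (∫⁻ x, g (uC x) ∂μ).toReal)
            + ((l * (∫⁻ x, g (v x) ∂μ).toReal + (1 - l) * (∫⁻ x, g (uC x) ∂μ).toReal)
              - (μ₀ / 2 * l * (1 - l) * ‖v - uC‖ ^ 2 + (∫⁻ x, g (w x) ∂μ).toReal)) := by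
        ring
      rw [hid]
      have t1 : 0 ≤ (2⁻¹ * (l * ‖S (chiMul C v) - yd‖ ^ 2 + (1 - l) * ‖S (chiMul C uC) - yd‖ ^ 2
                - l * (1 - l) * ‖S (chiMul C (v - uC))‖ ^ 2) + ∫ x in C, β x ∂μ
              + (∫⁻ x, g (w x) ∂μ).toReal)
            - (2⁻¹ * ‖S (chiMul C uC) - yd‖ ^ 2 + ∫ x in C, β x ∂μ
              + (∫⁻ x, g (uC x) ∂μ).toReal) := by linarith [hmR]
      linarith [hGwR]
    have := div_nonneg hdiffge hl0.le
    rw [mul_div_cancel_left₀ _ hl0.ne'] at this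
    linarith
  -- take the limit l → 0
  apply _root_.le_of_forall_pos_le_add
  intro ε hε
  have hKnn : 0 ≤ 2⁻¹ * ‖S (chiMul C (v - uC))‖ ^ 2 + μ₀ / 2 * ‖v - uC‖ ^ 2 := by positivity
  obtain ⟨l, hl0, hl1, hlK⟩ : ∃ l : ℝ, 0 < l ∧ l < 1 ∧
      l * (2⁻¹ * ‖S (chiMul C (v - uC))‖ ^ 2 + μ₀ / 2 * ‖v - uC‖ ^ 2) ≤ ε := by
    set K : ℝ := 2⁻¹ * ‖S (chiMul C (v - uC))‖ ^ 2 + μ₀ / 2 * ‖v - uC‖ ^ 2 with hKdef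
    refine ⟨min (ε / (K + 1)) 2⁻¹, lt_min (by positivity) (by norm_num),
      lt_of_le_of_lt (min_le_right _ _) (by norm_num), ?_⟩
    have h1 : min (ε / (K + 1)) 2⁻¹ ≤ ε / (K + 1) := min_le_left _ _
    have h2 : min (ε / (K + 1)) 2⁻¹ * K ≤ ε / (K + 1) * K := mul_le_mul_of_nonneg_right h1 hKnn
    have h3 : ε / (K + 1) * K ≤ ε := by
      rw [div_mul_eq_mul_div, div_le_iff₀ (by linarith)]
      nlinarith [hε.le, hKnn]
    exact h2.trans h3
  have hk := key l ⟨hl0, hl1⟩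
  linarith

end L0Control

open L0Control

set_option maxHeartbeats 2000000

/-- Stability estimate:
`μ‖u_B − u_A‖² + ‖y_B − y_A‖² ≤ ∫_Ω (χ_A − χ_B)(p_A u_B − p_B u_A) dx`,
with `μ ≥ 0` the strong convexity modulus of `g`. -/
theorem stability_inequality
    {d : ℕ} {Ω : Set (EuclideanSpace ℝ (Fin d))}
    (hΩm : MeasurableSet Ω) (hΩfin : volume Ω < ⊤)
    {Y : Type*} [NormedAddCommGroup Y] [InnerProductSpace ℝ Y] [CompleteSpace Y]
    (S : Lp ℝ 2 (volume.restrict Ω) →L[ℝ] Y) (yd : Y)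
    (g : ℝ → ℝ≥0∞)
    (hg_proper : ∃ u : ℝ, g u ≠ ⊤)
    (hg_lsc : LowerSemicontinuous g)
    (hg_zero : ∀ u : ℝ, g u = 0 ↔ u = 0)
    (β : EuclideanSpace ℝ (Fin d) → ℝ)
    (hβ : Integrable β (volume.restrict Ω))
    (μ₀ : ℝ) (hμ₀ : 0 ≤ μ₀)
    (hg_sconv : ∀ u v l : ℝ, l ∈ Set.Ioo (0 : ℝ) 1 →
      ENNReal.ofReal (μ₀ / 2 * l * (1 - l) * (u - v) ^ 2) + g (l * u + (1 - l) * v)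
        ≤ ENNReal.ofReal l * g u + ENNReal.ofReal (1 - l) * g v)
    (A : Set (EuclideanSpace ℝ (Fin d))) (hAm : MeasurableSet A) (hAΩ : A ⊆ Ω)
    (B : Set (EuclideanSpace ℝ (Fin d))) (hBm : MeasurableSet B) (hBΩ : B ⊆ Ω)
    (uA : Lp ℝ 2 (volume.restrict Ω)) (yA : Y) (pA : Lp ℝ 2 (volume.restrict Ω))
    (hsolA : IsSolution S yd g β A uA yA pA)
    (uB : Lp ℝ 2 (volume.restrict Ω)) (yB : Y) (pB : Lp ℝ 2 (volume.restrict Ω))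
    (hsolB : IsSolution S yd g β B uB yB pB)
    :
    μ₀ * ‖uB - uA‖ ^ 2 + ‖yB - yA‖ ^ 2
      ≤ ∫ x, (chi A x - chi B x) * (pA x * uB x - pB x * uA x) ∂(volume.restrict Ω) := by
  obtain ⟨hminA, hyA, hpA⟩ := hsolA
  obtain ⟨hminB, hyB, hpB⟩ := hsolB
  have hg_meas : Measurable g := hg_lsc.measurable
  have hg0 : g 0 = 0 := (hg_zero 0).mpr rfl
  -- finiteness of the g-integrals at minimizers
  have hGfin : ∀ u : Lp ℝ 2 (volume.restrict Ω), ∀ C : Set (EuclideanSpace ℝ (Fin d)),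
      IsMinimizer S yd g β C u → (∫⁻ x, g (u x) ∂(volume.restrict Ω)) ≠ ⊤ := by
    intro u C hmin
    have h0 : (∫⁻ x, g ((0 : Lp ℝ 2 (volume.restrict Ω)) x) ∂(volume.restrict Ω)) = 0 := by
      have hz : ∀ᵐ x ∂(volume.restrict Ω), g ((0 : Lp ℝ 2 (volume.restrict Ω)) x) = 0 := by
        filter_upwards [Lp.coeFn_zero ℝ 2 (volume.restrict Ω)] with x hx
        rw [hx]
        simpa using hg0
      rw [lintegral_congr_ae hz, lintegral_zero]
    have hm := hmin 0
    unfold Jfun at hm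
    rw [h0] at hm
    exact (ereal_extract (by simp) hm).1
  have hGA := hGfin uA A hminA
  have hGB := hGfin uB B hminB
  -- the two variational inequalities
  have hVIA := minimizer_vi S yd g β hg_meas μ₀ hμ₀ hg_sconv hAm hminA hGB hGA
  have hVIB := minimizer_vi S yd g β hg_meas μ₀ hμ₀ hg_sconv hBm hminB hGA hGB
  have hnorm1 : ‖uA - uB‖ = ‖uB - uA‖ := norm_sub_rev _ _
  have hnorm2 : ‖S (chiMul B (uA - uB))‖ = ‖S (chiMul B (uB - uA))‖ := by
    rw [chiMul_sub hBm, chiMul_sub hBm, map_sub, map_sub, norm_sub_rev]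
  rw [hnorm1, hnorm2, ← hyB] at hVIB
  rw [← hyA] at hVIA
  -- quadratic expansions
  have h1 : S (chiMul A (uB - uA)) = S (chiMul A uB) - yA := by
    rw [chiMul_sub hAm, map_sub, hyA]
  have h2 : S (chiMul B (uB - uA)) = yB - S (chiMul B uA) := by
    rw [chiMul_sub hBm, map_sub, hyB]
  have hFAB : ‖S (chiMul A uB) - yd‖ ^ 2
      = ‖yA - yd‖ ^ 2 + 2 * inner (𝕜 := ℝ) (yA - yd) (S (chiMul A (uB - uA)))
        + ‖S (chiMul A (uB - uA))‖ ^ 2 := by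
    have e : S (chiMul A uB) - yd = (yA - yd) + S (chiMul A (uB - uA)) := by rw [h1]; abel
    rw [e, norm_add_sq_real]
  have hFBA : ‖S (chiMul B uA) - yd‖ ^ 2
      = ‖yB - yd‖ ^ 2 - 2 * inner (𝕜 := ℝ) (yB - yd) (S (chiMul B (uB - uA)))
        + ‖S (chiMul B (uB - uA))‖ ^ 2 := by
    have e : S (chiMul B uA) - yd = (yB - yd) - S (chiMul B (uB - uA)) := by rw [h2]; abel
    rw [e, norm_sub_sq_real]
  rw [hFAB] at hVIA
  rw [hFBA] at hVIB
  have hkey : μ₀ * ‖uB - uA‖ ^ 2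
      ≤ inner (𝕜 := ℝ) (yA - yd) (S (chiMul A (uB - uA)))
        - inner (𝕜 := ℝ) (yB - yd) (S (chiMul B (uB - uA))) := by
    linarith [hVIA, hVIB]
  -- adjoint state
  have hadjA : ∀ q : Lp ℝ 2 (volume.restrict Ω),
      inner (𝕜 := ℝ) pA q = inner (𝕜 := ℝ) (yA - yd) (S q) := fun q => by
    rw [hpA]; exact ContinuousLinearMap.adjoint_inner_left S q (yA - yd)
  have hadjB : ∀ q : Lp ℝ 2 (volume.restrict Ω),
      inner (𝕜 := ℝ) pB q = inner (𝕜 := ℝ) (yB - yd) (S q) := fun q => by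
    rw [hpB]; exact ContinuousLinearMap.adjoint_inner_left S q (yB - yd)
  rw [← hadjA, ← hadjB] at hkey
  have hsplitA : inner (𝕜 := ℝ) pA (chiMul A (uB - uA))
      = inner (𝕜 := ℝ) pA (chiMul A uB) - inner (𝕜 := ℝ) pA (chiMul A uA) := by
    rw [chiMul_sub hAm, inner_sub_right]
  have hsplitB : inner (𝕜 := ℝ) pB (chiMul B (uB - uA))
      = inner (𝕜 := ℝ) pB (chiMul B uB) - inner (𝕜 := ℝ) pB (chiMul B uA) := by
    rw [chiMul_sub hBm, inner_sub_right]
  have hAA : inner (𝕜 := ℝ) pA (chiMul A uA) = inner (𝕜 := ℝ) (yA - yd) yA := by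
    rw [hadjA, ← hyA]
  have hBB : inner (𝕜 := ℝ) pB (chiMul B uB) = inner (𝕜 := ℝ) (yB - yd) yB := by
    rw [hadjB, ← hyB]
  have hAB : inner (𝕜 := ℝ) pA (chiMul B uB) = inner (𝕜 := ℝ) (yA - yd) yB := by
    rw [hadjA, ← hyB]
  have hBA : inner (𝕜 := ℝ) pB (chiMul A uA) = inner (𝕜 := ℝ) (yB - yd) yA := by
    rw [hadjB, ← hyA]
  -- integrability
  have hIntg : ∀ p u : Lp ℝ 2 (volume.restrict Ω),
      Integrable (fun x => p x * u x) (volume.restrict Ω) := fun p u => by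
    simpa [RCLike.inner_apply, mul_comm] using L2.integrable_inner (𝕜 := ℝ) p u
  have hIntc : ∀ (C : Set (EuclideanSpace ℝ (Fin d))), MeasurableSet C →
      ∀ p u : Lp ℝ 2 (volume.restrict Ω),
      Integrable (fun x => chi C x * (p x * u x)) (volume.restrict Ω) := by
    intro C hC p u
    have he : (fun x => chi C x * (p x * u x))
        = C.indicator (fun x => p x * u x) := by
      funext x
      by_cases hxC : x ∈ C
      · simp [chi, Set.indicator_of_mem hxC]
      · simp [chi, Set.indicator_of_notMem hxC]
    rw [he]
    exact (hIntg p u).indicator hC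
  -- inner products as integrals
  have hIP : ∀ (C : Set (EuclideanSpace ℝ (Fin d))), MeasurableSet C →
      ∀ p u : Lp ℝ 2 (volume.restrict Ω),
      ∫ x, chi C x * (p x * u x) ∂(volume.restrict Ω)
        = inner (𝕜 := ℝ) p (chiMul C u) := by
    intro C hC p u
    rw [L2.inner_def]
    refine integral_congr_ae ?_
    filter_upwards [chiMul_coe hC u] with x hx
    simp only [RCLike.inner_apply, conj_trivial, hx]
    by_cases hxC : x ∈ C
    · simp [chi, Set.indicator_of_mem hxC, mul_comm]
    · simp [chi, Set.indicator_of_notMem hxC]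
  -- split the target integral
  have he : (fun x => (chi A x - chi B x) * (pA x * uB x - pB x * uA x))
      = fun x => chi A x * (pA x * uB x) - chi A x * (pB x * uA x)
          - chi B x * (pA x * uB x) + chi B x * (pB x * uA x) := by
    funext x; ring
  have i1 : Integrable (fun x => chi A x * (pA x * uB x) - chi A x * (pB x * uA x))
      (volume.restrict Ω) := (hIntc A hAm pA uB).sub (hIntc A hAm pB uA)
  have i2 : Integrable (fun x => chi A x * (pA x * uB x) - chi A x * (pB x * uA x)
      - chi B x * (pA x * uB x)) (volume.restrict Ω) := i1.sub (hIntc B hBm pA uB)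
  have hTsplit : ∫ x, (chi A x - chi B x) * (pA x * uB x - pB x * uA x) ∂(volume.restrict Ω)
      = inner (𝕜 := ℝ) pA (chiMul A uB) - inner (𝕜 := ℝ) pB (chiMul A uA)
        - inner (𝕜 := ℝ) pA (chiMul B uB) + inner (𝕜 := ℝ) pB (chiMul B uA) := by
    rw [he, integral_add i2 (hIntc B hBm pB uA),
      integral_sub i1 (hIntc B hBm pA uB),
      integral_sub (hIntc A hAm pA uB) (hIntc A hAm pB uA),
      hIP A hAm pA uB, hIP A hAm pB uA, hIP B hBm pA uB, hIP B hBm pB uA]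
  rw [hTsplit]
  have hnormY := inner_expand yA yB yd
  linarith [hkey, hsplitA, hsplitB, hAA, hBB, hAB, hBA, hnormY]
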